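/- arXiv:2509.15052 — 4 statements merged into one kernel-verified Lean document; each statement's English description precedes it below -/
import Mathlib

section
/- (Completeness of the reduction.) Let l be a labeling of the label cover instance and let S ⊆ E be a set of edges satisfied by l. Define the coalition assignment C that assigns 1 robot to every source task w ∈ U ∪ V, 1 robot to every labeled task of the form (w, l(w)), 2 robots to every edge task ((u,v),(l(u),l(v))) with (u,v) ∈ S, and 0 robots to all other tasks. Then the total reward of C equals 4εn + |S|. In particular, if l satisfies all m edges, the total reward equals 4εn + m. -/
namespace MRTA

/-- Tasks of the reduced MRTA instance: a source task per vertex `w : U ⊕ V`,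
a labeled task per vertex-label pair, and an edge task per edge and label pair. -/
inductive Task (U V Λ : Type) where
  | src : U ⊕ V → Task U V Λ
  | lab : U ⊕ V → Λ → Task U V Λ
  | edg : U → V → Λ → Λ → Task U V Λ
  deriving DecidableEq

variable {U V Λ : Type} [Fintype U] [Fintype V] [Fintype Λ]
  [DecidableEq U] [DecidableEq V] [DecidableEq Λ]

/-- Reward of a source task `w`: `ε` if exactly one robot executes it, else `0`. -/
noncomputable def srcReward (ε : ℝ) (C : Task U V Λ → ℕ) (w : U ⊕ V) : ℝ :=
  if C (.src w) = 1 then ε else 0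

/-- Reward of a labeled task `(w, l)`: `ε` if exactly one robot executes it and the
corresponding source task earned positive reward, else `0`. -/
noncomputable def labReward (ε : ℝ) (C : Task U V Λ → ℕ) (w : U ⊕ V) (l : Λ) : ℝ :=
  if C (.lab w l) = 1 ∧ 0 < srcReward ε C w then ε else 0

/-- Reward of an edge task `((u,v),(lu,lv))`: `1` if exactly two robots execute it and both
corresponding labeled tasks earned positive reward, else `0`. -/
noncomputable def edgReward (ε : ℝ) (C : Task U V Λ → ℕ) (u : U) (v : V) (lu lv : Λ) : ℝ :=
  if C (.edg u v lu lv) = 2 ∧ 0 < labReward ε C (Sum.inl u) lu ∧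
      0 < labReward ε C (Sum.inr v) lv then 1 else 0

/-- Reward of an arbitrary task. -/
noncomputable def reward (ε : ℝ) (C : Task U V Λ → ℕ) : Task U V Λ → ℝ
  | .src w => srcReward ε C w
  | .lab w l => labReward ε C w l
  | .edg u v lu lv => edgReward ε C u v lu lv

/-- The source tasks of the instance. -/
def srcTasks : Finset (Task U V Λ) := Finset.univ.image Task.src

/-- The labeled tasks of the instance: one for each vertex `w` and label `l ∈ L w`. -/
def labTasks (L : U ⊕ V → Finset Λ) : Finset (Task U V Λ) :=
  Finset.univ.biUnion fun w => (L w).image (Task.lab w)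

/-- The edge tasks of the instance: one for each edge `e ∈ E` and pair `p ∈ R e`. -/
def edgTasks (E : Finset (U × V)) (R : U × V → Finset (Λ × Λ)) : Finset (Task U V Λ) :=
  E.biUnion fun e => (R e).image fun p => Task.edg e.1 e.2 p.1 p.2

/-- All tasks of the reduced MRTA instance. -/
def allTasks (L : U ⊕ V → Finset Λ) (E : Finset (U × V)) (R : U × V → Finset (Λ × Λ)) :
    Finset (Task U V Λ) :=
  srcTasks ∪ labTasks L ∪ edgTasks E R

/-- The total reward of a coalition assignment `C`: the sum of rewards over all tasks. -/
noncomputable def totalReward (L : U ⊕ V → Finset Λ) (E : Finset (U × V))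
    (R : U × V → Finset (Λ × Λ)) (ε : ℝ) (C : Task U V Λ → ℕ) : ℝ :=
  ∑ t ∈ allTasks L E R, reward ε C t
/-- **Completeness of the reduction.** Let `ℓ` be a labeling of the label cover
instance and `S ⊆ E` a set of edges satisfied by `ℓ`. The coalition assignment `C` that assigns
one robot to every source task, one robot to every labeled task `(w, ℓ w)`, two robots to every
edge task `((u,v),(ℓ u, ℓ v))` with `(u,v) ∈ S`, and zero robots to all other tasks, has total
reward exactly `4 ε n + |S|`. -/
theorem completeness (ε : ℝ) (hε : 0 < ε)
    (L : U ⊕ V → Finset Λ) (E : Finset (U × V)) (R : U × V → Finset (Λ × Λ))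
    (n : ℕ) (hU : Fintype.card U = n) (hV : Fintype.card V = n)
    (ℓ : U ⊕ V → Λ) (hℓ : ∀ w, ℓ w ∈ L w)
    (S : Finset (U × V)) (hSE : S ⊆ E)
    (hsat : ∀ e ∈ S, (ℓ (Sum.inl e.1), ℓ (Sum.inr e.2)) ∈ R e)
    (C : Task U V Λ → ℕ)
    (hCsrc : ∀ w, C (.src w) = 1)
    (hClab : ∀ w l, C (.lab w l) = if l = ℓ w then 1 else 0)
    (hCedg : ∀ u v lu lv, C (.edg u v lu lv) =
      if (u, v) ∈ S ∧ lu = ℓ (Sum.inl u) ∧ lv = ℓ (Sum.inr v) then 2 else 0) :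
    totalReward L E R ε C = 4 * ε * (n : ℝ) + (S.card : ℝ) := by
  have hs : ∀ w : U ⊕ V, srcReward ε C w = ε := fun w => by simp [srcReward, hCsrc]
  have hl : ∀ (w : U ⊕ V) (l : Λ), labReward ε C w l = if l = ℓ w then ε else 0 := by
    intro w l
    by_cases h : l = ℓ w <;> simp [labReward, hClab, hs, hε, h]
  have he : ∀ (u : U) (v : V) (lu lv : Λ), edgReward ε C u v lu lv =
      if (u, v) ∈ S ∧ lu = ℓ (Sum.inl u) ∧ lv = ℓ (Sum.inr v) then 1 else 0 := by
    intro u v lu lv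
    by_cases h : (u, v) ∈ S ∧ lu = ℓ (Sum.inl u) ∧ lv = ℓ (Sum.inr v)
    · simp [edgReward, hCedg, hl, hε, h, h.2.1, h.2.2]
    · simp only [edgReward, hCedg, if_neg h]
      simp [h]
  have d1 : Disjoint (srcTasks : Finset (Task U V Λ)) (labTasks L) := by
    rw [Finset.disjoint_left]
    rintro t ht ht'
    simp only [srcTasks, labTasks, Finset.mem_image, Finset.mem_biUnion,
      Finset.mem_univ, true_and] at ht ht'
    obtain ⟨w, rfl⟩ := ht
    obtain ⟨w', l', -, h⟩ := ht'
    cases h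
  have d2 : Disjoint (srcTasks ∪ labTasks L : Finset (Task U V Λ)) (edgTasks E R) := by
    rw [Finset.disjoint_left]
    rintro t ht ht'
    simp only [edgTasks, Finset.mem_biUnion, Finset.mem_image] at ht'
    obtain ⟨e, -, p, -, rfl⟩ := ht'
    simp only [srcTasks, labTasks, Finset.mem_union, Finset.mem_image, Finset.mem_biUnion,
      Finset.mem_univ, true_and] at ht
    rcases ht with ⟨w, h⟩ | ⟨w, l', -, h⟩ <;> cases h
  have hsumsrc : ∑ t ∈ (srcTasks : Finset (Task U V Λ)), reward ε C t = 2 * ε * (n : ℝ) := by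
    rw [srcTasks, Finset.sum_image (by intro a _ b _ h; exact Task.src.inj h)]
    simp only [reward, hs, Finset.sum_const, Finset.card_univ, Fintype.card_sum, hU, hV,
      nsmul_eq_mul]
    push_cast; ring
  have hsumlab : ∑ t ∈ labTasks L, reward ε C t = 2 * ε * (n : ℝ) := by
    rw [labTasks, Finset.sum_biUnion]
    · have : ∀ w : U ⊕ V, ∑ t ∈ (L w).image (Task.lab w), reward ε C t = ε := by
        intro w
        rw [Finset.sum_image (by intro a _ b _ h; exact (Task.lab.inj h).2)]
        simp only [reward, hl]
        rw [Finset.sum_ite_eq' (L w) (ℓ w) (fun _ => ε), if_pos (hℓ w)]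
      rw [Finset.sum_congr rfl fun w _ => this w]
      simp [Finset.card_univ, Fintype.card_sum, hU, hV]
      ring
    · intro a _ b _ hab
      simp only [Function.onFun]
      rw [Finset.disjoint_left]
      rintro t ht ht'
      simp only [Finset.mem_image] at ht ht'
      obtain ⟨la, -, rfl⟩ := ht
      obtain ⟨lb, -, h⟩ := ht'
      exact hab ((Task.lab.inj h).1.symm)
  have hsumedg : ∑ t ∈ edgTasks E R, reward ε C t = (S.card : ℝ) := by
    rw [edgTasks, Finset.sum_biUnion]
    · have key : ∀ e ∈ E, ∑ t ∈ (R e).image (fun p => Task.edg e.1 e.2 p.1 p.2),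
          reward ε C t = if e ∈ S then 1 else 0 := by
        intro e heE
        rw [Finset.sum_image (by
          intro a _ b _ h
          obtain ⟨-, -, h1, h2⟩ := Task.edg.inj h
          exact Prod.ext h1 h2)]
        simp only [reward, he]
        have : ∀ p : Λ × Λ, (if (e.1, e.2) ∈ S ∧ p.1 = ℓ (Sum.inl e.1) ∧ p.2 = ℓ (Sum.inr e.2)
            then (1 : ℝ) else 0)
            = if e ∈ S then (if p = (ℓ (Sum.inl e.1), ℓ (Sum.inr e.2)) then 1 else 0) else 0 := by
          intro p
          by_cases hS : e ∈ S <;> simp [hS, Prod.ext_iff, and_assoc]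
        rw [Finset.sum_congr rfl fun p _ => this p]
        by_cases hS : e ∈ S
        · simp only [if_pos hS]
          rw [Finset.sum_ite_eq' (R e) _ (fun _ => (1 : ℝ)), if_pos (hsat e hS)]
        · simp [hS]
      rw [Finset.sum_congr rfl key]
      rw [Finset.sum_ite_mem, Finset.inter_eq_right.mpr hSE]
      simp
    · intro a _ b _ hab
      simp only [Function.onFun]
      rw [Finset.disjoint_left]
      rintro t ht ht'
      simp only [Finset.mem_image] at ht ht'
      obtain ⟨pa, -, rfl⟩ := ht
      obtain ⟨pb, -, h⟩ := ht'
      obtain ⟨h1, h2, -, -⟩ := Task.edg.inj h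
      exact hab (Prod.ext h1.symm h2.symm)
  rw [totalReward, allTasks, Finset.sum_union d2, Finset.sum_union d1, hsumsrc, hsumlab, hsumedg]
  ring

end MRTA
end

section
/- (Executed edge tasks correspond to satisfied edges.) Let C be a coalition assignment in the reduced MRTA instance such that for every vertex w ∈ U ∪ V at most one labeled task of the form (w,l) satisfies C((w,l)) = 1. Then there exists a single labeling l* of the label cover instance such that every edge (u,v) ∈ E for which some edge task ((u,v),(l_u,l_v)) earns reward 1 under C is satisfied by l*. Consequently, the number of distinct edges of E possessing an edge task that earns reward 1 under C is at most the maximum number of edges simultaneously satisfiable by any labeling of the instance. -/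
namespace MRTA

variable {U V Λ : Type} [Fintype U] [Fintype V] [Fintype Λ]
  [DecidableEq U] [DecidableEq V] [DecidableEq Λ]

/-- **Executed edge tasks correspond to satisfied edges.** If for every vertex
`w` at most one labeled task `(w,l)` (with `l ∈ L w`) is assigned exactly one robot, then
there is a single labeling `ℓ` of the label cover instance such that every edge possessing an
edge task earning reward `1` under `C` is satisfied by `ℓ`; consequently, the number of
distinct edges possessing an edge task that earns reward `1` under `C` is at most the maximum
number of edges simultaneously satisfiable by any labeling of the instance. -/
theorem executed_edge_tasks_satisfiable (ε : ℝ) (hε : 0 < ε)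
    (L : U ⊕ V → Finset Λ) (hLne : ∀ w, (L w).Nonempty)
    (E : Finset (U × V)) (R : U × V → Finset (Λ × Λ))
    (hR : ∀ e ∈ E, R e ⊆ (L (Sum.inl e.1)) ×ˢ (L (Sum.inr e.2)))
    (C : Task U V Λ → ℕ)
    (huniq : ∀ w : U ⊕ V, ∀ l₁ ∈ L w, ∀ l₂ ∈ L w,
      C (.lab w l₁) = 1 → C (.lab w l₂) = 1 → l₁ = l₂) :
    ∃ ℓ : U ⊕ V → Λ, (∀ w, ℓ w ∈ L w) ∧
      (∀ e ∈ E, (∃ p ∈ R e, edgReward ε C e.1 e.2 p.1 p.2 = 1) →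
        (ℓ (Sum.inl e.1), ℓ (Sum.inr e.2)) ∈ R e) ∧
      (E.filter fun e => ∃ p ∈ R e, edgReward ε C e.1 e.2 p.1 p.2 = 1).card ≤
        ((Finset.univ : Finset (U ⊕ V → Λ)).filter fun g => ∀ w, g w ∈ L w).sup
          fun g => (E.filter fun e => (g (Sum.inl e.1), g (Sum.inr e.2)) ∈ R e).card := by
  classical
  set ℓ : U ⊕ V → Λ := fun w =>
    if h : ∃ l ∈ L w, C (.lab w l) = 1 then h.choose else (hLne w).choose with hℓ
  have hmem : ∀ w, ℓ w ∈ L w := by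
    intro w
    simp only [hℓ]
    split
    · rename_i h
      exact h.choose_spec.1
    · exact (hLne w).choose_spec
  have key : ∀ w, ∀ l ∈ L w, C (.lab w l) = 1 → ℓ w = l := by
    intro w l hl hC
    have h : ∃ l ∈ L w, C (.lab w l) = 1 := ⟨l, hl, hC⟩
    have := h.choose_spec
    simp only [hℓ, dif_pos h]
    exact huniq w _ this.1 l hl this.2 hC
  have hsat : ∀ e ∈ E, (∃ p ∈ R e, edgReward ε C e.1 e.2 p.1 p.2 = 1) →
      (ℓ (Sum.inl e.1), ℓ (Sum.inr e.2)) ∈ R e := by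
    rintro e he ⟨p, hpR, hp1⟩
    have hpL := hR e he hpR
    rw [Finset.mem_product] at hpL
    have hcond : C (.edg e.1 e.2 p.1 p.2) = 2 ∧ 0 < labReward ε C (Sum.inl e.1) p.1 ∧
        0 < labReward ε C (Sum.inr e.2) p.2 := by
      by_contra hc
      simp [edgReward, hc] at hp1
    have hu : C (.lab (Sum.inl e.1) p.1) = 1 := by
      have := hcond.2.1
      unfold labReward at this
      split at this
      · rename_i h; exact h.1
      · exact absurd this (lt_irrefl 0)
    have hv : C (.lab (Sum.inr e.2) p.2) = 1 := by
      have := hcond.2.2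
      unfold labReward at this
      split at this
      · rename_i h; exact h.1
      · exact absurd this (lt_irrefl 0)
    rw [key _ p.1 hpL.1 hu, key _ p.2 hpL.2 hv]
    exact hpR
  refine ⟨ℓ, hmem, hsat, ?_⟩
  have hsub : (E.filter fun e => ∃ p ∈ R e, edgReward ε C e.1 e.2 p.1 p.2 = 1) ⊆
      E.filter fun e => (ℓ (Sum.inl e.1), ℓ (Sum.inr e.2)) ∈ R e := by
    intro e he
    rw [Finset.mem_filter] at he ⊢
    exact ⟨he.1, hsat e he.1 he.2⟩
  refine le_trans (Finset.card_le_card hsub) ?_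
  exact Finset.le_sup (f := fun (g : U ⊕ V → Λ) => (E.filter fun e => (g (Sum.inl e.1), g (Sum.inr e.2)) ∈ R e).card) (Finset.mem_filter.mpr ⟨Finset.mem_univ ℓ, hmem⟩)

end MRTA
end

section
/- (Gap preservation of the reduction.) Suppose 6εn < 1/2. Then: (a) if some labeling of the label cover instance satisfies a set S of edges, there exists a coalition assignment in the reduced MRTA instance with total reward at least |S|; and (b) for every coalition assignment C with Σ_T C(T) ≤ 6n and with at most one labeled task per vertex assigned exactly one robot, the total reward is strictly less than k + 1/2, where k is the maximum number of edges simultaneously satisfiable by any labeling. Hence such an assignment with total reward at least m certifies that all m edges are simultaneously satisfiable, while if at most αm edges (α < 1) are simultaneously satisfiable every such assignment has total reward strictly less than αm + 1/2. -/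
namespace MRTA

variable {U V Λ : Type} [Fintype U] [Fintype V] [Fintype Λ]
  [DecidableEq U] [DecidableEq V] [DecidableEq Λ]

/-- The canonical coalition assignment induced by a labeling `ℓ`. -/
def soln (ℓ : U ⊕ V → Λ) : Task U V Λ → ℕ
  | .src _ => 1
  | .lab w l => if l = ℓ w then 1 else 0
  | .edg u v lu lv => if lu = ℓ (.inl u) ∧ lv = ℓ (.inr v) then 2 else 0

lemma reward_nonneg (ε : ℝ) (hε : 0 ≤ ε) (C : Task U V Λ → ℕ) (t : Task U V Λ) :
    0 ≤ reward ε C t := by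
  cases t <;> simp only [reward, srcReward, labReward, edgReward] <;> split_ifs
  all_goals first | exact hε | norm_num

/-- **Gap preservation of the reduction.** Suppose `6 ε n < 1/2`. Then
(a) if some labeling satisfies a set `S` of edges, there is a coalition assignment with total
reward at least `|S|`; (b) every coalition assignment `C` with at most `6 n` robot-task
executions and at most one labeled task per vertex assigned exactly one robot has total reward
strictly less than `k + 1/2`, where `k` is the maximum number of simultaneously satisfiable
edges; hence (c) such an assignment with total reward at least `m = |E|` certifies that all
`m` edges are simultaneously satisfiable, while (d) if at most `α m` edges (`α < 1`) are
simultaneously satisfiable, every such assignment has total reward strictly less than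
`α m + 1/2`. -/
theorem gap_preservation (ε : ℝ) (hε : 0 < ε)
    (L : U ⊕ V → Finset Λ) (hLne : ∀ w, (L w).Nonempty)
    (E : Finset (U × V)) (R : U × V → Finset (Λ × Λ))
    (hR : ∀ e ∈ E, R e ⊆ (L (Sum.inl e.1)) ×ˢ (L (Sum.inr e.2)))
    (n : ℕ) (hU : Fintype.card U = n) (hV : Fintype.card V = n)
    (hgap : 6 * ε * (n : ℝ) < 1 / 2)
    (k : ℕ)
    (hk : k = ((Finset.univ : Finset (U ⊕ V → Λ)).filter fun g => ∀ w, g w ∈ L w).sup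
      fun g => (E.filter fun e => (g (Sum.inl e.1), g (Sum.inr e.2)) ∈ R e).card) :
    -- (a)
    (∀ ℓ : U ⊕ V → Λ, (∀ w, ℓ w ∈ L w) → ∀ S : Finset (U × V), S ⊆ E →
      (∀ e ∈ S, (ℓ (Sum.inl e.1), ℓ (Sum.inr e.2)) ∈ R e) →
      ∃ C : Task U V Λ → ℕ, (S.card : ℝ) ≤ totalReward L E R ε C) ∧
    -- (b)
    (∀ C : Task U V Λ → ℕ, (∑ t ∈ allTasks L E R, C t ≤ 6 * n) →
      (∀ w : U ⊕ V, ∀ l₁ ∈ L w, ∀ l₂ ∈ L w,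
        C (.lab w l₁) = 1 → C (.lab w l₂) = 1 → l₁ = l₂) →
      totalReward L E R ε C < (k : ℝ) + 1 / 2) ∧
    -- (c)
    (∀ C : Task U V Λ → ℕ, (∑ t ∈ allTasks L E R, C t ≤ 6 * n) →
      (∀ w : U ⊕ V, ∀ l₁ ∈ L w, ∀ l₂ ∈ L w,
        C (.lab w l₁) = 1 → C (.lab w l₂) = 1 → l₁ = l₂) →
      (E.card : ℝ) ≤ totalReward L E R ε C → k = E.card) ∧
    -- (d)
    (∀ α : ℝ, α < 1 → (k : ℝ) ≤ α * (E.card : ℝ) →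
      ∀ C : Task U V Λ → ℕ, (∑ t ∈ allTasks L E R, C t ≤ 6 * n) →
      (∀ w : U ⊕ V, ∀ l₁ ∈ L w, ∀ l₂ ∈ L w,
        C (.lab w l₁) = 1 → C (.lab w l₂) = 1 → l₁ = l₂) →
      totalReward L E R ε C < α * (E.card : ℝ) + 1 / 2) := by
  classical
  -- k is at most the number of edges
  have hkE : k ≤ E.card := by
    rw [hk]
    exact Finset.sup_le fun g _ => Finset.card_filter_le _ _
  have hεn : 0 ≤ ε * n := by positivity
  -- the key upper bound (content of part (b))
  have key : ∀ C : Task U V Λ → ℕ,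
      (∀ w : U ⊕ V, ∀ l₁ ∈ L w, ∀ l₂ ∈ L w,
        C (.lab w l₁) = 1 → C (.lab w l₂) = 1 → l₁ = l₂) →
      totalReward L E R ε C < (k : ℝ) + 1 / 2 := by
    intro C huniq
    -- disjointness of the three families of tasks
    have hd1 : Disjoint (srcTasks : Finset (Task U V Λ)) (labTasks L) := by
      simp only [Finset.disjoint_left, srcTasks, labTasks, Finset.mem_image,
        Finset.mem_biUnion, Finset.mem_univ, true_and]
      rintro t ⟨w, rfl⟩ ⟨w', l, hl, h⟩
      simp at h
    have hd2 : Disjoint ((srcTasks : Finset (Task U V Λ)) ∪ labTasks L) (edgTasks E R) := by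
      simp only [Finset.disjoint_left, srcTasks, labTasks, edgTasks, Finset.mem_union,
        Finset.mem_image, Finset.mem_biUnion, Finset.mem_univ, true_and]
      rintro t (⟨w, rfl⟩ | ⟨w, l, hl, rfl⟩) ⟨e, he, p, hp, h⟩ <;> simp at h
    have hdisj : (E : Set (U × V)).PairwiseDisjoint
        (fun e => (R e).image fun p => Task.edg e.1 e.2 p.1 p.2) := by
      intro e _ e' _ hne
      simp only [Function.onFun, Finset.disjoint_left, Finset.mem_image]
      rintro t ⟨p, hp, rfl⟩ ⟨q, hq, h⟩
      obtain ⟨h1, h2, -, -⟩ := Task.edg.inj h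
      exact hne (Prod.ext h1.symm h2.symm)
    have hdisjw : ((Finset.univ : Finset (U ⊕ V)) : Set (U ⊕ V)).PairwiseDisjoint
        (fun w => (L w).image (Task.lab w)) := by
      intro w _ w' _ hne
      simp only [Function.onFun, Finset.disjoint_left, Finset.mem_image]
      rintro t ⟨l, hl, rfl⟩ ⟨l', hl', h⟩
      exact hne (Task.lab.inj h).1.symm
    have hsplit : totalReward L E R ε C =
        (∑ w : U ⊕ V, srcReward ε C w) +
        (∑ w : U ⊕ V, ∑ l ∈ L w, labReward ε C w l) +
        ∑ e ∈ E, ∑ p ∈ R e, edgReward ε C e.1 e.2 p.1 p.2 := by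
      unfold totalReward allTasks
      rw [Finset.sum_union hd2, Finset.sum_union hd1]
      congr 1
      · congr 1
        · rw [srcTasks, Finset.sum_image (by intro a _ b _ h; exact Task.src.inj h)]
          simp [reward]
        · rw [labTasks, Finset.sum_biUnion hdisjw]
          refine Finset.sum_congr rfl fun w _ => ?_
          rw [Finset.sum_image (by intro a _ b _ h; exact (Task.lab.inj h).2)]
          simp [reward]
      · rw [edgTasks, Finset.sum_biUnion hdisj]
        refine Finset.sum_congr rfl fun e he => ?_
        rw [Finset.sum_image (by
          intro p _ q _ h
          obtain ⟨-, -, h3, h4⟩ := Task.edg.inj h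
          exact Prod.ext h3 h4)]
        simp [reward]
    -- bound for source tasks
    have b1 : (∑ w : U ⊕ V, srcReward ε C w) ≤ 2 * ε * n := by
      calc (∑ w : U ⊕ V, srcReward ε C w) ≤ ∑ _w : U ⊕ V, ε :=
            Finset.sum_le_sum fun w _ => by
              unfold srcReward; split_ifs <;> simp [hε.le]
        _ = (Fintype.card (U ⊕ V) : ℝ) * ε := by
            rw [Finset.sum_const, nsmul_eq_mul, Finset.card_univ]
        _ = 2 * ε * n := by
            rw [Fintype.card_sum, hU, hV]; push_cast; ring
    -- bound for labeled tasks
    have b2 : (∑ w : U ⊕ V, ∑ l ∈ L w, labReward ε C w l) ≤ 2 * ε * n := by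
      have hw : ∀ w : U ⊕ V, ∑ l ∈ L w, labReward ε C w l ≤ ε := by
        intro w
        have hcard : ((L w).filter fun l =>
            C (.lab w l) = 1 ∧ 0 < srcReward ε C w).card ≤ 1 := by
          apply Finset.card_le_one.mpr
          intro a ha b hb
          simp only [Finset.mem_filter] at ha hb
          exact huniq w a ha.1 b hb.1 ha.2.1 hb.2.1
        calc ∑ l ∈ L w, labReward ε C w l
            = ∑ l ∈ (L w).filter fun l =>
                C (.lab w l) = 1 ∧ 0 < srcReward ε C w, ε := by
              rw [Finset.sum_filter]; rfl
          _ = ((L w).filter fun l =>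
                C (.lab w l) = 1 ∧ 0 < srcReward ε C w).card • ε := by
              rw [Finset.sum_const]
          _ ≤ 1 • ε := by
              rw [nsmul_eq_mul, nsmul_eq_mul]
              exact mul_le_mul_of_nonneg_right (by exact_mod_cast hcard) hε.le
          _ = ε := one_nsmul ε
      calc (∑ w : U ⊕ V, ∑ l ∈ L w, labReward ε C w l) ≤ ∑ _w : U ⊕ V, ε :=
            Finset.sum_le_sum fun w _ => hw w
        _ = (Fintype.card (U ⊕ V) : ℝ) * ε := by
            rw [Finset.sum_const, nsmul_eq_mul, Finset.card_univ]
        _ = 2 * ε * n := by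
            rw [Fintype.card_sum, hU, hV]; push_cast; ring
    -- the labeling extracted from C
    set g : (U ⊕ V) → Λ := fun w =>
      if h : ∃ l ∈ L w, C (.lab w l) = 1 then h.choose else (hLne w).choose with hgdef
    have hgL : ∀ w, g w ∈ L w := by
      intro w
      by_cases h : ∃ l ∈ L w, C (.lab w l) = 1
      · rw [hgdef]; simp only [dif_pos h]; exact h.choose_spec.1
      · rw [hgdef]; simp only [dif_neg h]; exact (hLne w).choose_spec
    have hgval : ∀ w, ∀ l ∈ L w, C (.lab w l) = 1 → g w = l := by
      intro w l hl hc
      have h : ∃ l ∈ L w, C (.lab w l) = 1 := ⟨l, hl, hc⟩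
      rw [hgdef]
      simp only [dif_pos h]
      exact huniq w h.choose h.choose_spec.1 l hl h.choose_spec.2 hc
    -- bound for edge tasks
    have b3 : (∑ e ∈ E, ∑ p ∈ R e, edgReward ε C e.1 e.2 p.1 p.2) ≤ (k : ℝ) := by
      have hinner : ∀ e ∈ E, ∑ p ∈ R e, edgReward ε C e.1 e.2 p.1 p.2 ≤
          (if (g (Sum.inl e.1), g (Sum.inr e.2)) ∈ R e then (1 : ℝ) else 0) := by
        intro e he
        have hforce : ∀ p ∈ (R e).filter fun p =>
            C (.edg e.1 e.2 p.1 p.2) = 2 ∧ 0 < labReward ε C (Sum.inl e.1) p.1 ∧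
              0 < labReward ε C (Sum.inr e.2) p.2,
            p = (g (Sum.inl e.1), g (Sum.inr e.2)) := by
          intro p hp
          simp only [Finset.mem_filter] at hp
          obtain ⟨hpR, -, h1, h2⟩ := hp
          have hc1 : C (.lab (Sum.inl e.1) p.1) = 1 := by
            by_contra hne
            simp [labReward, hne] at h1
          have hc2 : C (.lab (Sum.inr e.2) p.2) = 1 := by
            by_contra hne
            simp [labReward, hne] at h2
          have hpL := hR e he hpR
          rw [Finset.mem_product] at hpL
          have e1 := hgval (Sum.inl e.1) p.1 hpL.1 hc1
          have e2 := hgval (Sum.inr e.2) p.2 hpL.2 hc2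
          exact Prod.ext e1.symm e2.symm
        have hsum : ∑ p ∈ R e, edgReward ε C e.1 e.2 p.1 p.2 =
            ((R e).filter fun p =>
              C (.edg e.1 e.2 p.1 p.2) = 2 ∧ 0 < labReward ε C (Sum.inl e.1) p.1 ∧
                0 < labReward ε C (Sum.inr e.2) p.2).card • (1 : ℝ) := by
          rw [← Finset.sum_const, Finset.sum_filter]; rfl
        rw [hsum, nsmul_eq_mul, mul_one]
        by_cases hsat : (g (Sum.inl e.1), g (Sum.inr e.2)) ∈ R e
        · rw [if_pos hsat]
          have : ((R e).filter fun p =>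
              C (.edg e.1 e.2 p.1 p.2) = 2 ∧ 0 < labReward ε C (Sum.inl e.1) p.1 ∧
                0 < labReward ε C (Sum.inr e.2) p.2).card ≤ 1 := by
            apply Finset.card_le_one.mpr
            intro a ha b hb
            rw [hforce a ha, hforce b hb]
          exact_mod_cast this
        · rw [if_neg hsat]
          have : ((R e).filter fun p =>
              C (.edg e.1 e.2 p.1 p.2) = 2 ∧ 0 < labReward ε C (Sum.inl e.1) p.1 ∧
                0 < labReward ε C (Sum.inr e.2) p.2) = ∅ := by
            apply Finset.eq_empty_of_forall_notMem
            intro p hp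
            have := hforce p hp
            apply hsat
            rw [← this]
            exact (Finset.mem_filter.mp hp).1
          simp [this]
      have hkg : ((E.filter fun e =>
          (g (Sum.inl e.1), g (Sum.inr e.2)) ∈ R e).card : ℝ) ≤ (k : ℝ) := by
        have : (E.filter fun e => (g (Sum.inl e.1), g (Sum.inr e.2)) ∈ R e).card ≤ k := by
          rw [hk]
          exact Finset.le_sup
            (f := fun g : U ⊕ V → Λ =>
              (E.filter fun e => (g (Sum.inl e.1), g (Sum.inr e.2)) ∈ R e).card)
            (s := (Finset.univ.filter fun g : U ⊕ V → Λ => ∀ w, g w ∈ L w))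
            (Finset.mem_filter.mpr ⟨Finset.mem_univ g, hgL⟩)
        exact_mod_cast this
      calc (∑ e ∈ E, ∑ p ∈ R e, edgReward ε C e.1 e.2 p.1 p.2)
          ≤ ∑ e ∈ E, (if (g (Sum.inl e.1), g (Sum.inr e.2)) ∈ R e then (1 : ℝ) else 0) :=
            Finset.sum_le_sum hinner
        _ = ((E.filter fun e => (g (Sum.inl e.1), g (Sum.inr e.2)) ∈ R e).card : ℝ) := by
            rw [Finset.sum_boole]
        _ ≤ (k : ℝ) := hkg
    -- put the three bounds together
    have h4 : 2 * ε * n + 2 * ε * n ≤ 6 * ε * n := by nlinarith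
    calc totalReward L E R ε C
        ≤ 2 * ε * n + 2 * ε * n + (k : ℝ) := by
          rw [hsplit]; gcongr
      _ ≤ 6 * ε * n + (k : ℝ) := by linarith
      _ < 1 / 2 + (k : ℝ) := by linarith
      _ = (k : ℝ) + 1 / 2 := by ring
  refine ⟨?_, fun C _ h => key C h, ?_, ?_⟩
  · -- (a)
    intro ℓ hℓ S hSE hSsat
    refine ⟨soln ℓ, ?_⟩
    set T : Finset (Task U V Λ) :=
      S.image fun e => Task.edg e.1 e.2 (ℓ (Sum.inl e.1)) (ℓ (Sum.inr e.2)) with hT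
    have hTsub : T ⊆ allTasks L E R := by
      intro t ht
      simp only [hT, Finset.mem_image] at ht
      obtain ⟨e, he, rfl⟩ := ht
      simp only [allTasks, edgTasks, Finset.mem_union, Finset.mem_biUnion, Finset.mem_image]
      right
      exact ⟨e, hSE he, (ℓ (Sum.inl e.1), ℓ (Sum.inr e.2)), hSsat e he, rfl⟩
    have hrew : ∀ e ∈ S,
        reward ε (soln ℓ) (Task.edg e.1 e.2 (ℓ (Sum.inl e.1)) (ℓ (Sum.inr e.2))) = 1 := by
      intro e he
      simp [reward, edgReward, labReward, srcReward, soln, hε]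
    calc (S.card : ℝ) = ∑ t ∈ T, reward ε (soln ℓ) t := by
          rw [hT, Finset.sum_image (by
            intro a _ b _ h
            obtain ⟨h1, h2, -, -⟩ := Task.edg.inj h
            exact Prod.ext h1 h2)]
          rw [Finset.sum_congr rfl hrew]
          simp
      _ ≤ totalReward L E R ε (soln ℓ) :=
          Finset.sum_le_sum_of_subset_of_nonneg hTsub
            (fun t _ _ => reward_nonneg ε hε.le (soln ℓ) t)
  · -- (c)
    intro C hC huniq hge
    have h1 := key C huniq
    have h2 : (E.card : ℝ) < (k : ℝ) + 1 := by linarith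
    have h3 : E.card < k + 1 := by exact_mod_cast h2
    exact le_antisymm hkE (Nat.lt_succ_iff.mp h3)
  · -- (d)
    intro α hα hkα C hC huniq
    have h1 := key C huniq
    linarith

end MRTA
end

section
/- (Schedulability of the reduction within makespan 3.) Let l be a labeling of the label cover instance and let S ⊆ E be a set of pairwise vertex-disjoint edges satisfied by l. With 2n robots (one robot r_w associated to each vertex w ∈ U ∪ V), all tasks of unit duration, and zero inter-task travel times, there exists a feasible schedule of makespan 3 in which: during the time interval [0,1] each robot r_w executes the source task w; during [1,2] each robot r_w executes the labeled task (w, l(w)); and during [2,3], for each edge (u,v) ∈ S, the two robots r_u and r_v jointly execute the edge task ((u,v),(l(u),l(v))). In this schedule every task is executed after all tasks it depends on have finished, each robot executes at most one task at a time, source and labeled tasks receive coalitions of size exactly 1, and the scheduled edge tasks receive coalitions of size exactly 2; the resulting total reward is 4εn + |S|. -/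
namespace MRTA

variable {U V Λ : Type} [Fintype U] [Fintype V] [Fintype Λ]
  [DecidableEq U] [DecidableEq V] [DecidableEq Λ]

/-- The coalition assigned to a task by a schedule `σ` (robot `r_w` for each vertex `w`,
three unit-duration time slots): the number of robots that execute the task at some slot. -/
def coalitionOf (σ : (U ⊕ V) → Fin 3 → Option (Task U V Λ)) (t : Task U V Λ) : ℕ :=
  (Finset.univ.filter fun r : U ⊕ V => ∃ s : Fin 3, σ r s = some t).card

/-- The schedule used in the proof of schedulability. -/
noncomputable def sched (ℓ : U ⊕ V → Λ) (S : Finset (U × V)) :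
    (U ⊕ V) → Fin 3 → Option (Task U V Λ) := fun r t =>
  if t = 0 then some (.src r)
  else if t = 1 then some (.lab r (ℓ r))
  else
    match r with
    | .inl u =>
        if h : ∃ v, (u, v) ∈ S then
          some (.edg u h.choose (ℓ (.inl u)) (ℓ (.inr h.choose)))
        else none
    | .inr v =>
        if h : ∃ u, (u, v) ∈ S then
          some (.edg h.choose v (ℓ (.inl h.choose)) (ℓ (.inr v)))
        else none

/-- **Schedulability of the reduction within makespan 3.** Given a labeling `ℓ`
and a set `S ⊆ E` of pairwise vertex-disjoint edges satisfied by `ℓ`, with `2n` robots (one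
per vertex), unit task durations and zero travel times, there is a feasible schedule of
makespan `3`: in slot `0` robot `r_w` executes source task `w`, in slot `1` it executes
labeled task `(w, ℓ w)`, and in slot `2`, for each `(u,v) ∈ S`, robots `r_u, r_v` jointly
execute the edge task `((u,v),(ℓ u, ℓ v))`; every executed task starts after all the tasks it
depends on have finished, source and labeled tasks receive coalitions of size exactly `1`,
scheduled edge tasks receive coalitions of size exactly `2`, and the resulting total reward
is `4 ε n + |S|`. -/
theorem schedulability (ε : ℝ) (hε : 0 < ε)
    (L : U ⊕ V → Finset Λ) (E : Finset (U × V)) (R : U × V → Finset (Λ × Λ))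
    (n : ℕ) (hU : Fintype.card U = n) (hV : Fintype.card V = n)
    (ℓ : U ⊕ V → Λ) (hℓ : ∀ w, ℓ w ∈ L w)
    (S : Finset (U × V)) (hSE : S ⊆ E)
    (hsat : ∀ e ∈ S, (ℓ (Sum.inl e.1), ℓ (Sum.inr e.2)) ∈ R e)
    (hdisj : ∀ e₁ ∈ S, ∀ e₂ ∈ S, e₁ ≠ e₂ → e₁.1 ≠ e₂.1 ∧ e₁.2 ≠ e₂.2) :
    ∃ σ : (U ⊕ V) → Fin 3 → Option (Task U V Λ),
      -- slot 0: each robot executes its source task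
      (∀ w, σ w 0 = some (.src w)) ∧
      -- slot 1: each robot executes its labeled task
      (∀ w, σ w 1 = some (.lab w (ℓ w))) ∧
      -- slot 2: the robots of each edge of S jointly execute the corresponding edge task
      (∀ e ∈ S,
        σ (Sum.inl e.1) 2 = some (.edg e.1 e.2 (ℓ (Sum.inl e.1)) (ℓ (Sum.inr e.2))) ∧
        σ (Sum.inr e.2) 2 = some (.edg e.1 e.2 (ℓ (Sum.inl e.1)) (ℓ (Sum.inr e.2)))) ∧
      -- every labeled task is executed after its source task has finished
      (∀ r t w l', σ r t = some (.lab w l') →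
        ∃ r' t', t' < t ∧ σ r' t' = some (.src w)) ∧
      -- every edge task is executed after both of its labeled tasks have finished
      (∀ r t u v lu lv, σ r t = some (.edg u v lu lv) →
        (∃ r' t', t' < t ∧ σ r' t' = some (.lab (Sum.inl u) lu)) ∧
        (∃ r' t', t' < t ∧ σ r' t' = some (.lab (Sum.inr v) lv))) ∧
      -- coalition sizes
      (∀ w, coalitionOf σ (.src w) = 1) ∧
      (∀ w, coalitionOf σ (.lab w (ℓ w)) = 1) ∧
      (∀ e ∈ S, coalitionOf σ (.edg e.1 e.2 (ℓ (Sum.inl e.1)) (ℓ (Sum.inr e.2))) = 2) ∧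
      -- resulting total reward
      totalReward L E R ε (coalitionOf σ) = 4 * ε * (n : ℝ) + (S.card : ℝ) := by
  classical
  set σ : (U ⊕ V) → Fin 3 → Option (Task U V Λ) := sched ℓ S with hσdef
  -- uniqueness of matched partners
  have huniqV : ∀ u v, (u, v) ∈ S → ∀ v', (u, v') ∈ S → v' = v := by
    intro u v hv v' hv'
    by_contra h
    exact (hdisj (u, v') hv' (u, v) hv (by simp [h])).1 rfl
  have huniqU : ∀ u v, (u, v) ∈ S → ∀ u', (u', v) ∈ S → u' = u := by
    intro u v hv u' hv'
    by_contra h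
    exact (hdisj (u', v) hv' (u, v) hv (by simp [h])).2 rfl
  -- basic slot values
  have hσ0 : ∀ w, σ w 0 = some (.src w) := by intro w; simp [hσdef, sched]
  have hσ1 : ∀ w, σ w 1 = some (.lab w (ℓ w)) := by intro w; simp [hσdef, sched]
  have hσ2l : ∀ e ∈ S, σ (Sum.inl e.1) 2 =
      some (.edg e.1 e.2 (ℓ (Sum.inl e.1)) (ℓ (Sum.inr e.2))) := by
    intro e he
    have h : ∃ v, (e.1, v) ∈ S := ⟨e.2, he⟩
    have hch : h.choose = e.2 := huniqV e.1 e.2 he h.choose h.choose_spec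
    simp [hσdef, sched, dif_pos h, hch]
  have hσ2r : ∀ e ∈ S, σ (Sum.inr e.2) 2 =
      some (.edg e.1 e.2 (ℓ (Sum.inl e.1)) (ℓ (Sum.inr e.2))) := by
    intro e he
    have h : ∃ u, (u, e.2) ∈ S := ⟨e.1, he⟩
    have hch : h.choose = e.1 := huniqU e.1 e.2 he h.choose h.choose_spec
    simp [hσdef, sched, dif_pos h, hch]
  -- shape lemma
  have hσ2lnone : ∀ u, ¬ (∃ v, (u, v) ∈ S) → σ (Sum.inl u) 2 = none := by
    intro u hex
    show sched ℓ S (Sum.inl u) 2 = none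
    unfold sched
    rw [if_neg (by decide), if_neg (by decide)]
    exact dif_neg hex
  have hσ2lsome : ∀ u (hex : ∃ v, (u, v) ∈ S), σ (Sum.inl u) 2 =
      some (.edg u hex.choose (ℓ (Sum.inl u)) (ℓ (Sum.inr hex.choose))) := by
    intro u hex
    show sched ℓ S (Sum.inl u) 2 = _
    unfold sched
    rw [if_neg (by decide), if_neg (by decide)]
    exact dif_pos hex
  have hσ2rnone : ∀ v, ¬ (∃ u, (u, v) ∈ S) → σ (Sum.inr v) 2 = none := by
    intro v hex
    show sched ℓ S (Sum.inr v) 2 = none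
    unfold sched
    rw [if_neg (by decide), if_neg (by decide)]
    exact dif_neg hex
  have hσ2rsome : ∀ v (hex : ∃ u, (u, v) ∈ S), σ (Sum.inr v) 2 =
      some (.edg hex.choose v (ℓ (Sum.inl hex.choose)) (ℓ (Sum.inr v))) := by
    intro v hex
    show sched ℓ S (Sum.inr v) 2 = _
    unfold sched
    rw [if_neg (by decide), if_neg (by decide)]
    exact dif_pos hex
  have hshape : ∀ r (s : Fin 3) task, σ r s = some task →
      (s = 0 ∧ task = .src r) ∨ (s = 1 ∧ task = .lab r (ℓ r)) ∨
      (s = 2 ∧ ∃ e ∈ S, (r = Sum.inl e.1 ∨ r = Sum.inr e.2) ∧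
        task = .edg e.1 e.2 (ℓ (Sum.inl e.1)) (ℓ (Sum.inr e.2))) := by
    intro r s task h
    fin_cases s
    · have h' : σ r 0 = some task := h
      rw [hσ0 r] at h'
      exact Or.inl ⟨rfl, (Option.some_inj.mp h').symm⟩
    · have h' : σ r 1 = some task := h
      rw [hσ1 r] at h'
      exact Or.inr (Or.inl ⟨rfl, (Option.some_inj.mp h').symm⟩)
    · refine Or.inr (Or.inr ⟨rfl, ?_⟩)
      rcases r with u | v
      · have h' : σ (Sum.inl u) 2 = some task := h
        by_cases hex : ∃ v', (u, v') ∈ S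
        · rw [hσ2lsome u hex] at h'
          exact ⟨(u, hex.choose), hex.choose_spec, Or.inl rfl, (Option.some_inj.mp h').symm⟩
        · rw [hσ2lnone u hex] at h'
          exact absurd h' (by simp)
      · have h' : σ (Sum.inr v) 2 = some task := h
        by_cases hex : ∃ u', (u', v) ∈ S
        · rw [hσ2rsome v hex] at h'
          exact ⟨(hex.choose, v), hex.choose_spec, Or.inr rfl, (Option.some_inj.mp h').symm⟩
        · rw [hσ2rnone v hex] at h'
          exact absurd h' (by simp)

  -- membership characterizations
  have memsrc : ∀ r w, (∃ s : Fin 3, σ r s = some (.src w)) ↔ r = w := by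
    intro r w
    constructor
    · rintro ⟨s, hs⟩
      rcases hshape r s _ hs with ⟨_, h⟩ | ⟨_, h⟩ | ⟨_, e, _, _, h⟩
      · injection h with h1; exact h1.symm
      · cases h
      · cases h
    · rintro rfl; exact ⟨0, hσ0 r⟩
  have memlab : ∀ r w l, (∃ s : Fin 3, σ r s = some (.lab w l)) ↔ (r = w ∧ l = ℓ w) := by
    intro r w l
    constructor
    · rintro ⟨s, hs⟩
      rcases hshape r s _ hs with ⟨_, h⟩ | ⟨_, h⟩ | ⟨_, e, _, _, h⟩
      · cases h
      · injection h with h1 h2; exact ⟨h1.symm, by rw [h2, ← h1]⟩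
      · cases h
    · rintro ⟨rfl, rfl⟩; exact ⟨1, hσ1 r⟩
  have memedg : ∀ r u v lu lv, (∃ s : Fin 3, σ r s = some (.edg u v lu lv)) ↔
      ((u, v) ∈ S ∧ lu = ℓ (Sum.inl u) ∧ lv = ℓ (Sum.inr v) ∧
        (r = Sum.inl u ∨ r = Sum.inr v)) := by
    intro r u v lu lv
    constructor
    · rintro ⟨s, hs⟩
      rcases hshape r s _ hs with ⟨_, h⟩ | ⟨_, h⟩ | ⟨_, e, he, hr, h⟩
      · cases h
      · cases h
      · injection h with h1 h2 h3 h4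
        subst h1; subst h2; subst h3; subst h4
        exact ⟨by rw [Prod.mk.eta]; exact he, rfl, rfl, hr⟩
    · rintro ⟨hS, rfl, rfl, rfl | rfl⟩
      · exact ⟨2, hσ2l (u, v) hS⟩
      · exact ⟨2, hσ2r (u, v) hS⟩
  -- coalition sizes
  have csrc : ∀ w, coalitionOf σ (.src w) = 1 := by
    intro w
    have : (Finset.univ.filter fun r : U ⊕ V => ∃ s : Fin 3, σ r s = some (.src w)) = {w} := by
      ext r; simp [memsrc r w]
    rw [coalitionOf, this, Finset.card_singleton]
  have clab : ∀ w l, coalitionOf σ (.lab w l) = if l = ℓ w then 1 else 0 := by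
    intro w l
    by_cases hl : l = ℓ w
    · have : (Finset.univ.filter fun r : U ⊕ V => ∃ s : Fin 3, σ r s = some (.lab w l)) = {w} := by
        ext r
        simp only [Finset.mem_filter, Finset.mem_univ, true_and, Finset.mem_singleton,
          memlab r w l]
        simp [hl]
      rw [coalitionOf, this, if_pos hl, Finset.card_singleton]
    · have : (Finset.univ.filter fun r : U ⊕ V => ∃ s : Fin 3, σ r s = some (.lab w l)) = ∅ := by
        ext r
        simp only [Finset.mem_filter, Finset.mem_univ, true_and, Finset.notMem_empty,
          iff_false, memlab r w l]
        simp [hl]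
      rw [coalitionOf, this, if_neg hl, Finset.card_empty]
  have cedg : ∀ u v lu lv, coalitionOf σ (.edg u v lu lv) =
      if (u, v) ∈ S ∧ lu = ℓ (Sum.inl u) ∧ lv = ℓ (Sum.inr v) then 2 else 0 := by
    intro u v lu lv
    by_cases hc : (u, v) ∈ S ∧ lu = ℓ (Sum.inl u) ∧ lv = ℓ (Sum.inr v)
    · have : (Finset.univ.filter fun r : U ⊕ V => ∃ s : Fin 3, σ r s = some (.edg u v lu lv)) =
          {Sum.inl u, Sum.inr v} := by
        ext r
        simp only [Finset.mem_filter, Finset.mem_univ, true_and, Finset.mem_insert,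
          Finset.mem_singleton, memedg r u v lu lv]
        simp [hc.1, ← hc.2.1, ← hc.2.2]
      rw [coalitionOf, this, if_pos hc]
      rw [Finset.card_insert_of_notMem (by simp), Finset.card_singleton]
    · have : (Finset.univ.filter fun r : U ⊕ V => ∃ s : Fin 3, σ r s = some (.edg u v lu lv)) =
          ∅ := by
        ext r
        simp only [Finset.mem_filter, Finset.mem_univ, true_and, Finset.notMem_empty, iff_false]
        rw [memedg r u v lu lv]
        tauto
      rw [coalitionOf, this, if_neg hc, Finset.card_empty]
  set C := coalitionOf σ with hC
  -- rewards
  have rs : ∀ w, srcReward ε C w = ε := by intro w; simp [srcReward, csrc]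
  have rl : ∀ w l, labReward ε C w l = if l = ℓ w then ε else 0 := by
    intro w l
    by_cases hl : l = ℓ w
    · have h1 : C (Task.lab w l) = 1 := (clab w l).trans (if_pos hl)
      have h2 : 0 < srcReward ε C w := by rw [rs]; exact hε
      rw [labReward, if_pos ⟨h1, h2⟩, if_pos hl]
    · have h1 : C (Task.lab w l) = 0 := (clab w l).trans (if_neg hl)
      rw [labReward, if_neg (fun hcon => by have h := hcon.1; omega), if_neg hl]
  have re : ∀ u v lu lv, edgReward ε C u v lu lv =
      if (u, v) ∈ S ∧ lu = ℓ (Sum.inl u) ∧ lv = ℓ (Sum.inr v) then 1 else 0 := by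
    intro u v lu lv
    by_cases hc : (u, v) ∈ S ∧ lu = ℓ (Sum.inl u) ∧ lv = ℓ (Sum.inr v)
    · have h1 : C (Task.edg u v lu lv) = 2 := (cedg u v lu lv).trans (if_pos hc)
      have h2 : 0 < labReward ε C (Sum.inl u) lu := by rw [rl, if_pos hc.2.1]; exact hε
      have h3 : 0 < labReward ε C (Sum.inr v) lv := by rw [rl, if_pos hc.2.2]; exact hε
      rw [edgReward, if_pos ⟨h1, h2, h3⟩, if_pos hc]
    · have h1 : C (Task.edg u v lu lv) = 0 := (cedg u v lu lv).trans (if_neg hc)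
      rw [edgReward, if_neg (fun hcon => by have h := hcon.1; omega), if_neg hc]
  -- total reward
  have hTR : totalReward L E R ε C = 4 * ε * (n : ℝ) + (S.card : ℝ) := by
    have hd1 : Disjoint (srcTasks : Finset (Task U V Λ)) (labTasks L) := by
      rw [Finset.disjoint_left]
      intro t ht ht'
      simp only [srcTasks, Finset.mem_image, Finset.mem_univ, true_and] at ht
      simp only [labTasks, Finset.mem_biUnion, Finset.mem_univ, true_and,
        Finset.mem_image] at ht'
      obtain ⟨w, rfl⟩ := ht
      obtain ⟨w', l, _, h⟩ := ht'
      cases h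
    have hd2 : Disjoint (srcTasks ∪ labTasks L : Finset (Task U V Λ)) (edgTasks E R) := by
      rw [Finset.disjoint_left]
      intro t ht ht'
      simp only [edgTasks, Finset.mem_biUnion, Finset.mem_image] at ht'
      obtain ⟨e, _, p, _, h⟩ := ht'
      rw [Finset.mem_union] at ht
      rcases ht with ht | ht
      · simp only [srcTasks, Finset.mem_image, Finset.mem_univ, true_and] at ht
        obtain ⟨w, rfl⟩ := ht
        cases h
      · simp only [labTasks, Finset.mem_biUnion, Finset.mem_univ, true_and,
          Finset.mem_image] at ht
        obtain ⟨w, l, _, rfl⟩ := ht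
        cases h
    rw [totalReward, allTasks, Finset.sum_union hd2, Finset.sum_union hd1]
    have hsrc : ∑ t ∈ (srcTasks : Finset (Task U V Λ)), reward ε C t = 2 * (n : ℝ) * ε := by
      rw [srcTasks, Finset.sum_image (fun a _ b _ h => by injection h)]
      have hcong : ∀ w ∈ (Finset.univ : Finset (U ⊕ V)), reward ε C (Task.src w) = ε :=
        fun w _ => rs w
      rw [Finset.sum_congr rfl hcong, Finset.sum_const, Finset.card_univ,
        Fintype.card_sum, hU, hV]
      push_cast
      ring
    have hlab : ∑ t ∈ labTasks L, reward ε C t = 2 * (n : ℝ) * ε := by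
      rw [labTasks, Finset.sum_biUnion ?pd]
      case pd =>
        intro a _ b _ hab
        apply Finset.disjoint_left.mpr
        intro t ht ht'
        simp only [Finset.mem_image] at ht ht'
        obtain ⟨l, _, rfl⟩ := ht
        obtain ⟨l', _, h⟩ := ht'
        injection h with h1 _
        exact hab h1.symm
      have inner : ∀ w : U ⊕ V, ∑ t ∈ (L w).image (Task.lab w), reward ε C t = ε := by
        intro w
        rw [Finset.sum_image (fun a _ b _ h => by simpa using h)]
        have hcong : ∀ l ∈ L w, reward ε C (Task.lab w l) = if l = ℓ w then ε else 0 :=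
          fun l _ => rl w l
        rw [Finset.sum_congr rfl hcong,
          Finset.sum_ite_eq' (L w) (ℓ w) fun _ => ε, if_pos (hℓ w)]
      have hcong : ∀ w ∈ (Finset.univ : Finset (U ⊕ V)),
          ∑ t ∈ (L w).image (Task.lab w), reward ε C t = ε := fun w _ => inner w
      rw [Finset.sum_congr rfl hcong, Finset.sum_const, Finset.card_univ,
        Fintype.card_sum, hU, hV]
      push_cast
      ring
    have hedg : ∑ t ∈ edgTasks E R, reward ε C t = (S.card : ℝ) := by
      rw [edgTasks, Finset.sum_biUnion ?pd]
      case pd =>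
        intro a _ b _ hab
        apply Finset.disjoint_left.mpr
        intro t ht ht'
        simp only [Finset.mem_image] at ht ht'
        obtain ⟨p, _, rfl⟩ := ht
        obtain ⟨q, _, h⟩ := ht'
        injection h with h1 h2 _ _
        exact hab (Prod.ext h1.symm h2.symm)
      have inner : ∀ e ∈ E, ∑ t ∈ (R e).image (fun p => Task.edg e.1 e.2 p.1 p.2),
          reward ε C t = if e ∈ S then (1 : ℝ) else 0 := by
        intro e _
        rw [Finset.sum_image (fun a _ b _ h => by
          injection h with _ _ h3 h4; exact Prod.ext h3 h4)]
        have step : ∀ p ∈ R e, reward ε C (Task.edg e.1 e.2 p.1 p.2) =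
            if p = (ℓ (Sum.inl e.1), ℓ (Sum.inr e.2)) ∧ e ∈ S then (1 : ℝ) else 0 := by
          intro p _
          rw [show reward ε C (Task.edg e.1 e.2 p.1 p.2) =
            edgReward ε C e.1 e.2 p.1 p.2 from rfl, re]
          refine if_congr ?_ rfl rfl
          constructor
          · rintro ⟨h1, h2, h3⟩
            exact ⟨Prod.ext h2 h3, by rwa [Prod.mk.eta] at h1⟩
          · rintro ⟨h1, h2⟩
            exact ⟨by rw [Prod.mk.eta]; exact h2, by rw [h1], by rw [h1]⟩
        rw [Finset.sum_congr rfl step]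
        by_cases heS : e ∈ S
        · have hcong : ∀ p ∈ R e,
              (if p = (ℓ (Sum.inl e.1), ℓ (Sum.inr e.2)) ∧ e ∈ S then (1 : ℝ) else 0) =
              (if p = (ℓ (Sum.inl e.1), ℓ (Sum.inr e.2)) then (1 : ℝ) else 0) :=
            fun p _ => if_congr (and_iff_left heS) rfl rfl
          rw [Finset.sum_congr rfl hcong,
            Finset.sum_ite_eq' (R e) _ fun _ => (1 : ℝ), if_pos (hsat e heS), if_pos heS]
        · rw [Finset.sum_eq_zero fun p _ => by simp [heS], if_neg heS]
      rw [Finset.sum_congr rfl inner, Finset.sum_ite_mem,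
        Finset.inter_eq_right.mpr hSE, Finset.sum_const, nsmul_eq_mul, mul_one]

    rw [hsrc, hlab, hedg]
    ring
  refine ⟨σ, hσ0, hσ1, fun e he => ⟨hσ2l e he, hσ2r e he⟩, ?_, ?_, csrc,
    fun w => (clab w (ℓ w)).trans (if_pos rfl),
    fun e he => (cedg e.1 e.2 _ _).trans
      (if_pos ⟨by rw [Prod.mk.eta]; exact he, rfl, rfl⟩), hTR⟩
  · intro r t w l' h
    rcases hshape r t _ h with ⟨_, h⟩ | ⟨ht, h⟩ | ⟨_, e, _, _, h⟩
    · cases h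
    · injection h with h1 _
      exact ⟨w, 0, by rw [ht]; decide, h1 ▸ hσ0 r⟩
    · cases h
  · intro r t u v lu lv h
    rcases hshape r t _ h with ⟨_, h⟩ | ⟨_, h⟩ | ⟨ht, e, he, _, h⟩
    · cases h
    · cases h
    · injection h with h1 h2 h3 h4
      subst h1; subst h2; subst h3; subst h4
      exact ⟨⟨Sum.inl e.1, 1, by rw [ht]; decide, hσ1 _⟩,
        ⟨Sum.inr e.2, 1, by rw [ht]; decide, hσ1 _⟩⟩

end MRTA
end
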